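/- If A is an n×n real matrix that is irreducibly weakly diagonally dominant with at least one row strictly diagonally dominant, has positive diagonal entries and nonpositive off-diagonal entries, and is symmetric, then A is positive definite. -/

import Mathlib

open Finset Matrix

/-- A symmetric, irreducibly weakly diagonally dominant matrix (with at least one row of
strict dominance), positive diagonal and nonpositive off-diagonal entries, is positive
definite. -/
theorem symm_irr_diag_dominant_M_matrix_posDef (n : ℕ) (A : Matrix (Fin n) (Fin n) ℝ)
    (hdiag : ∀ i, 0 < A i i)
    (hoff : ∀ i j, i ≠ j → A i j ≤ 0)
    (hwdd : ∀ i, ∑ j ∈ Finset.univ.erase i, |A i j| ≤ |A i i|)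
    (hstrict : ∃ k, ∑ j ∈ Finset.univ.erase k, |A k j| < |A k k|)
    (hirr : ∀ i j : Fin n, i ≠ j → Relation.TransGen (fun a b => A a b ≠ 0) i j)
    (hsym : A.IsSymm) :
    A.PosDef := by
  have hsym' : ∀ i j, A j i = A i j := fun i j => hsym.apply i j
  have habs : ∀ i j : Fin n, i ≠ j → |A i j| = -A i j :=
    fun i j h => abs_of_nonpos (hoff i j h)
  -- d i = row slack
  set d : Fin n → ℝ := fun i => A i i - ∑ j ∈ Finset.univ.erase i, |A i j| with hd_def
  have hd_eq : ∀ i, d i = ∑ j, A i j := by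
    intro i
    have h1 : ∑ j ∈ Finset.univ.erase i, |A i j| = ∑ j ∈ Finset.univ.erase i, -A i j :=
      Finset.sum_congr rfl fun j hj =>
        habs i j (Ne.symm (Finset.ne_of_mem_erase hj))
    have h2 : ∑ j ∈ Finset.univ.erase i, A i j = (∑ j, A i j) - A i i :=
      Finset.sum_erase_eq_sub (Finset.mem_univ i)
    simp only [hd_def, h1, Finset.sum_neg_distrib, h2]
    ring
  have hd_nonneg : ∀ i, 0 ≤ d i := by
    intro i
    have := hwdd i
    rw [abs_of_pos (hdiag i)] at this
    simp only [hd_def]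
    linarith
  -- key identity
  have key : ∀ x : Fin n → ℝ, x ⬝ᵥ A.mulVec x =
      (∑ i, d i * x i ^ 2) + (1/2) * ∑ i, ∑ j, (-A i j) * (x i - x j) ^ 2 := by
    intro x
    have P : ∀ f : Fin n → Fin n → ℝ,
        ∑ i, ∑ j, f i j = ∑ p : Fin n × Fin n, f p.1 p.2 :=
      fun f => (Fintype.sum_prod_type (fun p => f p.1 p.2)).symm
    have hdot : x ⬝ᵥ A.mulVec x = ∑ i, ∑ j, x i * (A i j * x j) := by
      simp [dotProduct, Matrix.mulVec, Finset.mul_sum]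
    have hswap : (∑ p : Fin n × Fin n, A p.1 p.2 * x p.2 ^ 2)
        = ∑ p : Fin n × Fin n, A p.1 p.2 * x p.1 ^ 2 := by
      refine ((P fun i j => A i j * x j ^ 2).symm.trans ?_).trans
        (P fun i j => A i j * x i ^ 2)
      rw [Finset.sum_comm]
      exact Finset.sum_congr rfl fun i _ => Finset.sum_congr rfl fun j _ => by
        rw [hsym' i j]
    have hdsum : ∑ i, d i * x i ^ 2 = ∑ p : Fin n × Fin n, A p.1 p.2 * x p.1 ^ 2 := by
      refine Eq.trans ?_ (P fun i j => A i j * x i ^ 2)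
      exact Finset.sum_congr rfl fun i _ => by rw [hd_eq, Finset.sum_mul]
    have hS : ∑ p : Fin n × Fin n, (-A p.1 p.2) * (x p.1 - x p.2) ^ 2
        = ((∑ p : Fin n × Fin n, x p.1 * (A p.1 p.2 * x p.2))
            + (∑ p : Fin n × Fin n, x p.1 * (A p.1 p.2 * x p.2)))
          - (∑ p : Fin n × Fin n, A p.1 p.2 * x p.1 ^ 2)
          - (∑ p : Fin n × Fin n, A p.1 p.2 * x p.2 ^ 2) := by
      rw [← Finset.sum_add_distrib, ← Finset.sum_sub_distrib, ← Finset.sum_sub_distrib]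
      exact Finset.sum_congr rfl fun p _ => by ring
    rw [hdot, P, P, hdsum]
    rw [hswap] at hS
    linarith
  -- nonnegativity of each summand
  have hterm_nonneg : ∀ x : Fin n → ℝ, ∀ i j : Fin n, 0 ≤ (-A i j) * (x i - x j) ^ 2 := by
    intro x i j
    rcases eq_or_ne i j with rfl | h
    · simp
    · exact mul_nonneg (neg_nonneg.2 (hoff i j h)) (sq_nonneg _)
  rw [Matrix.posDef_iff_dotProduct_mulVec]
  constructor
  · rw [Matrix.IsHermitian, Matrix.conjTranspose_eq_transpose_of_trivial]; exact hsym
  · intro x hx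
    have hstar : star x = x := star_trivial x
    rw [hstar, key x]
    have hS1 : 0 ≤ ∑ i, d i * x i ^ 2 :=
      Finset.sum_nonneg fun i _ => mul_nonneg (hd_nonneg i) (sq_nonneg _)
    have hS2 : 0 ≤ ∑ i, ∑ j, (-A i j) * (x i - x j) ^ 2 :=
      Finset.sum_nonneg fun i _ => Finset.sum_nonneg fun j _ => hterm_nonneg x i j
    rcases lt_or_eq_of_le (by positivity : (0:ℝ) ≤ (∑ i, d i * x i ^ 2) +
        (1/2) * ∑ i, ∑ j, (-A i j) * (x i - x j) ^ 2) with hpos | heq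
    · exact hpos
    · -- total is zero, derive contradiction
      exfalso
      have hS1z : ∑ i, d i * x i ^ 2 = 0 := by linarith [hS2, hS1, heq.symm]
      have hS2z : ∑ i, ∑ j, (-A i j) * (x i - x j) ^ 2 = 0 := by linarith [hS2, hS1, heq.symm]
      have hterm1 : ∀ i, d i * x i ^ 2 = 0 := by
        have := (Finset.sum_eq_zero_iff_of_nonneg
          (fun i _ => mul_nonneg (hd_nonneg i) (sq_nonneg (x i)))).1 hS1z
        exact fun i => this i (Finset.mem_univ i)
      have hterm2 : ∀ i j, (-A i j) * (x i - x j) ^ 2 = 0 := by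
        have hrow := (Finset.sum_eq_zero_iff_of_nonneg
          (fun i _ => Finset.sum_nonneg fun j _ => hterm_nonneg x i j)).1 hS2z
        intro i j
        have := (Finset.sum_eq_zero_iff_of_nonneg
          (fun j _ => hterm_nonneg x i j)).1 (hrow i (Finset.mem_univ i))
        exact this j (Finset.mem_univ j)
      have hconn : ∀ a b : Fin n, A a b ≠ 0 → x a = x b := by
        intro a b hab
        have h := hterm2 a b
        have h2 : (x a - x b) ^ 2 = 0 := by
          rcases mul_eq_zero.1 h with h' | h'
          · exact absurd (neg_eq_zero.1 h') hab
          · exact h'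
        have := pow_eq_zero_iff (n := 2) (by norm_num) |>.1 h2
        linarith [sub_eq_zero.1 this]
      have htrans : ∀ a b : Fin n, Relation.TransGen (fun a b => A a b ≠ 0) a b → x a = x b := by
        intro a b h
        induction h with
        | single h => exact hconn _ _ h
        | tail _ h ih => exact ih.trans (hconn _ _ h)
      obtain ⟨k, hk⟩ := hstrict
      have hdk : 0 < d k := by
        have := hk
        rw [abs_of_pos (hdiag k)] at this
        simp only [hd_def]
        linarith
      have hxk : x k = 0 := by
        have := hterm1 k
        have h2 : x k ^ 2 = 0 := by
          rcases mul_eq_zero.1 this with h' | h'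
          · exact absurd h' (ne_of_gt hdk)
          · exact h'
        exact pow_eq_zero_iff (n := 2) (by norm_num) |>.1 h2
      obtain ⟨i, hi⟩ := Function.ne_iff.1 hx
      rcases eq_or_ne i k with rfl | hik
      · exact hi hxk
      · exact hi ((htrans i k (hirr i k hik)).trans hxk)
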